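/- Let G be a simple graph on a finite vertex type V, let φ', φ : Sym2 V → Fin K be two classifications of edges such that φ'(e) ≤ φ(e) for every edge e of G, let s, g be vertices, and suppose the set Π(s,g) of paths from s to g is nonempty. If π' ∈ Π(s,g) minimizes θ_{φ'} in the colex order over Π(s,g) and π ∈ Π(s,g) minimizes θ_φ in the colex order over Π(s,g), then θ_{φ'}(π') ≤_colex θ_φ(π). In other words, the optimal class-count value is monotone in the classification: a planner whose classification is pointwise at most as bad obtains a path value that is at most as bad. -/

import Mathlib

open scoped NNReal

/-- The colexicographic strict order on `Fin K → ℕ`. -/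
def ColexLt {K : ℕ} (a b : Fin K → ℕ) : Prop :=
  ∃ k, a k < b k ∧ ∀ j, k < j → a j = b j

/-- The colexicographic order: `a ≤_colex b` iff `a <_colex b` or `a = b`. -/
def ColexLe {K : ℕ} (a b : Fin K → ℕ) : Prop :=
  ColexLt a b ∨ a = b

/-- The class-count vector of a walk: `theta G φ w k` is the number of edges of `w`
(with multiplicity) whose class under `φ` is `k`. -/
def theta {V : Type*} {K : ℕ} (G : SimpleGraph V) (φ : Sym2 V → Fin K)
    {s g : V} (w : G.Walk s g) : Fin K → ℕ :=
  fun k => w.edges.countP (fun e => decide (φ e = k))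

/-- The total weight of a walk: the sum of `c` over its edges (with multiplicity). -/
def weight {V : Type*} (G : SimpleGraph V) (c : Sym2 V → ℝ≥0)
    {s g : V} (w : G.Walk s g) : ℝ≥0 :=
  (w.edges.map c).sum

/-- The largest class `k` with `theta G φ w k > 0`, for a walk with at least one edge. -/
def maxClass {V : Type*} {K : ℕ} (G : SimpleGraph V) (φ : Sym2 V → Fin K)
    {s g : V} (w : G.Walk s g) (hw : w.edges ≠ []) : Fin K :=
  (Finset.univ.filter fun k => 0 < theta G φ w k).max' (by
    obtain ⟨e, he⟩ := List.exists_mem_of_ne_nil w.edges hw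
    refine ⟨φ e, ?_⟩
    simp only [Finset.mem_filter, Finset.mem_univ, true_and, theta]
    exact (Finset.mem_filter_univ _).mpr (List.countP_pos_iff.mpr ⟨e, he, by simp⟩))

/-- A walk between distinct vertices has at least one edge. -/
theorem edges_ne_nil_of_ne {V : Type*} {G : SimpleGraph V} {s g : V}
    (h : s ≠ g) (w : G.Walk s g) : w.edges ≠ [] := by
  cases w with
  | nil => exact absurd rfl h
  | cons h' p => simp

/-- Lexicographic order on pairs `(maxClass, count)`. -/
def PairLe {K : ℕ} (p q : Fin K × ℕ) : Prop :=
  p.1 < q.1 ∨ (p.1 = q.1 ∧ p.2 ≤ q.2)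

/-- Lexicographic order on keys `(class-count vector, weight)`:
first the colex order on the vectors, then the usual order on weights. -/
def KeyLe {K : ℕ} (p q : (Fin K → ℕ) × ℝ≥0) : Prop :=
  ColexLt p.1 q.1 ∨ (p.1 = q.1 ∧ p.2 ≤ q.2)

theorem colexLt_trans' {K : ℕ} {a b c : Fin K → ℕ} (h1 : ColexLt a b) (h2 : ColexLt b c) :
    ColexLt a c := by
  obtain ⟨k1, hk1, ha1⟩ := h1
  obtain ⟨k2, hk2, ha2⟩ := h2
  rcases lt_trichotomy k1 k2 with hlt | heq | hgt
  · exact ⟨k2, by rw [ha1 k2 hlt]; exact hk2,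
      fun j hj => (ha1 j (hlt.trans hj)).trans (ha2 j hj)⟩
  · subst heq
    exact ⟨k1, hk1.trans hk2, fun j hj => (ha1 j hj).trans (ha2 j hj)⟩
  · exact ⟨k1, by rw [← ha2 k1 hgt]; exact hk1,
      fun j hj => (ha1 j hj).trans (ha2 j (hgt.trans hj))⟩

theorem colexLe_trans' {K : ℕ} {a b c : Fin K → ℕ} (h1 : ColexLe a b) (h2 : ColexLe b c) :
    ColexLe a c := by
  rcases h1 with h1 | rfl
  · rcases h2 with h2 | rfl
    · exact Or.inl (colexLt_trans' h1 h2)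
    · exact Or.inl h1
  · exact h2

theorem colex_step {K : ℕ} {A B : Fin K → ℕ} {i j : Fin K}
    (hAB : ColexLe A B) (hij : i ≤ j) :
    ColexLe (fun k => A k + if i = k then 1 else 0) (fun k => B k + if j = k then 1 else 0) := by
  rcases hAB with ⟨k, hk, hab⟩ | rfl
  · rcases lt_trichotomy k j with hkj | rfl | hjk
    · rcases eq_or_lt_of_le hij with rfl | hij'
      · -- i = j > k : witness k
        refine Or.inl ⟨k, ?_, ?_⟩
        · have hik : i ≠ k := fun he => absurd (he ▸ hkj) (lt_irrefl _)
          simpa [hik] using hk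
        · intro m hm
          have : A m = B m := hab m hm
          by_cases hh : i = m <;> simp [hh, this]
      · -- i < j, k < j : witness j
        refine Or.inl ⟨j, ?_, ?_⟩
        · have hij2 : i ≠ j := ne_of_lt hij'
          have : A j = B j := hab j hkj
          simp [hij2, this]
        · intro m hm
          have h1 : i ≠ m := ne_of_lt (hij'.trans hm)
          have h2 : j ≠ m := ne_of_lt hm
          simp [h1, h2, hab m (hkj.trans hm)]
    · -- k = j : witness k
      refine Or.inl ⟨k, ?_, ?_⟩
      · simp only
        by_cases hh : i = k <;> simp [hh] <;> omega
      · intro m hm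
        have h1 : i ≠ m := ne_of_lt (lt_of_le_of_lt hij hm)
        have h2 : k ≠ m := ne_of_lt hm
        simp [h1, h2, hab m hm]
    · -- j < k : witness k
      refine Or.inl ⟨k, ?_, ?_⟩
      · have h1 : i ≠ k := ne_of_lt (lt_of_le_of_lt hij hjk)
        have h2 : j ≠ k := ne_of_lt hjk
        simpa [h1, h2] using hk
      · intro m hm
        have h1 : i ≠ m := ne_of_lt (lt_of_le_of_lt hij (hjk.trans hm))
        have h2 : j ≠ m := ne_of_lt (hjk.trans hm)
        simp [h1, h2, hab m hm]
  · rcases eq_or_lt_of_le hij with rfl | hij'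
    · exact Or.inr rfl
    · refine Or.inl ⟨j, ?_, ?_⟩
      · have hij2 : i ≠ j := ne_of_lt hij'
        simp [hij2]
      · intro m hm
        have h1 : i ≠ m := ne_of_lt (hij'.trans hm)
        have h2 : j ≠ m := ne_of_lt hm
        simp [h1, h2]

theorem colex_list {V : Type*} {K : ℕ} (φ' φ : Sym2 V → Fin K)
    (l : List (Sym2 V)) (h : ∀ e ∈ l, φ' e ≤ φ e) :
    ColexLe (fun k => l.countP (fun e => decide (φ' e = k)))
            (fun k => l.countP (fun e => decide (φ e = k))) := by
  induction l with
  | nil => exact Or.inr rfl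
  | cons a l ih =>
    have h1 := ih (fun e he => h e (List.mem_cons_of_mem a he))
    have h2 := colex_step h1 (h a List.mem_cons_self)
    simpa only [List.countP_cons, decide_eq_true_eq] using h2

/-- Monotonicity of the optimal class-count value in the classification: if `φ'` is
pointwise at most `φ` on the edges of `G`, `π'` minimizes `theta` under `φ'` in the colex
order over the (nonempty) set of paths from `s` to `g`, and `π` minimizes `theta` under
`φ` over the same set, then `theta φ' π' ≤_colex theta φ π`. -/
theorem optimal_value_mono_in_classification {V : Type*} [Fintype V] {K : ℕ}
    (G : SimpleGraph V) (φ' φ : Sym2 V → Fin K)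
    (h : ∀ e ∈ G.edgeSet, φ' e ≤ φ e) (s g : V)
    (hne : ∃ p : G.Walk s g, p.IsPath)
    (π' π : G.Walk s g) (hπ' : π'.IsPath) (hπ : π.IsPath)
    (hmin' : ∀ p : G.Walk s g, p.IsPath → ColexLe (theta G φ' π') (theta G φ' p))
    (hmin : ∀ p : G.Walk s g, p.IsPath → ColexLe (theta G φ π) (theta G φ p)) :
    ColexLe (theta G φ' π') (theta G φ π) := by
  have step1 : ColexLe (theta G φ' π') (theta G φ' π) := hmin' π hπ
  have step2 : ColexLe (theta G φ' π) (theta G φ π) :=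
    colex_list φ' φ π.edges (fun e he => h e (π.edges_subset_edgeSet he))
  exact colexLe_trans' step1 step2
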